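/- For any classical modal formula α, the following three formulas are semantically equivalent over all Kripke models and teams: the inclusion atom ⊤ ⊆ α, the singular might formula ⩒α (satisfied by T iff T = ∅ or some w ∈ T has {w} ⊨ α), and the might formula ▽α (satisfied by T iff T = ∅ or some nonempty S ⊆ T has S ⊨ α). -/
import Mathlib


structure KModel (W : Type) where
  R : W → W → Prop
  V : ℕ → Set W

inductive MF : Type
  | prop : ℕ → MF
  | bot : MF
  | neg : MF → MF
  | or : MF → MF → MF
  | and : MF → MF → MF
  | dia : MF → MF
  | box : MF → MF

def MF.top : MF := MF.neg MF.bot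

def wSat {W : Type} (M : KModel W) : W → MF → Prop
  | w, .prop p => w ∈ M.V p
  | _, .bot => False
  | w, .neg a => ¬ wSat M w a
  | w, .or a b => wSat M w a ∨ wSat M w b
  | w, .and a b => wSat M w a ∧ wSat M w b
  | w, .dia a => ∃ v, M.R w v ∧ wSat M v a
  | w, .box a => ∀ v, M.R w v → wSat M v a

inductive IncForm : Type
  | prop : ℕ → IncForm
  | bot : IncForm
  | incl : List MF → List MF → IncForm
  | neg : MF → IncForm
  | or : IncForm → IncForm → IncForm
  | and : IncForm → IncForm → IncForm
  | dia : IncForm → IncForm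
  | box : IncForm → IncForm

/-- image R[T] -/
def img {W : Type} (M : KModel W) (T : Set W) : Set W := {v | ∃ w ∈ T, M.R w v}

/-- successor team relation: S ⊆ R[T] and T ⊆ R⁻¹[S] -/
def succTeam {W : Type} (M : KModel W) (T S : Set W) : Prop :=
  (∀ v ∈ S, ∃ w ∈ T, M.R w v) ∧ (∀ w ∈ T, ∃ v ∈ S, M.R w v)

def TSat {W : Type} (M : KModel W) : Set W → IncForm → Prop
  | T, .prop p => T ⊆ M.V p
  | T, .bot => T = ∅
  | T, .incl as bs => ∀ w ∈ T, ∃ v ∈ T, ∀ i, ∀ (h1 : i < as.length) (h2 : i < bs.length),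
      (wSat M w (as.get ⟨i, h1⟩) ↔ wSat M v (bs.get ⟨i, h2⟩))
  | T, .neg a => ∀ w ∈ T, ¬ wSat M w a
  | T, .or f g => ∃ T1 T2, T1 ∪ T2 = T ∧ TSat M T1 f ∧ TSat M T2 g
  | T, .and f g => TSat M T f ∧ TSat M T g
  | T, .dia f => ∃ S, succTeam M T S ∧ TSat M S f
  | T, .box f => TSat M (img M T) f

/-- embedding of classical formulas into ML(⊆) -/
def toInc : MF → IncForm
  | .prop p => .prop p
  | .bot => .bot
  | .neg a => .neg a
  | .or a b => .or (toInc a) (toInc b)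
  | .and a b => .and (toInc a) (toInc b)
  | .dia a => .dia (toInc a)
  | .box a => .box (toInc a)

/-- translate a Boolean constant to ⊤ or ⊥ -/
def ofBool : Bool → MF := fun x => if x then MF.top else MF.bot

/-- α^⊤ = α, α^⊥ = ¬α -/
def signed : Bool → MF → MF := fun x a => if x then a else a.neg

/-- a^x = α₁^{x₁} ∧ ... ∧ αₙ^{xₙ} -/
def conjSigned (xs : List Bool) (as : List MF) : MF :=
  (List.zipWith signed xs as).foldr MF.and MF.top

theorem flatness {W : Type} (M : KModel W) (α : MF) :
    ∀ T : Set W, TSat M T (toInc α) ↔ ∀ w ∈ T, wSat M w α := by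
  induction α with
  | prop p => intro T; rfl
  | bot => intro T; simp [toInc, TSat, wSat, Set.eq_empty_iff_forall_notMem]
  | neg a ih => intro T; rfl
  | or a b iha ihb =>
    intro T
    constructor
    · rintro ⟨T1, T2, rfl, h1, h2⟩ w hw
      rcases hw with hw | hw
      · exact Or.inl ((iha T1).1 h1 w hw)
      · exact Or.inr ((ihb T2).1 h2 w hw)
    · intro h
      refine ⟨{w ∈ T | wSat M w a}, {w ∈ T | wSat M w b}, ?_, ?_, ?_⟩
      · ext w; constructor
        · rintro (⟨hw, _⟩ | ⟨hw, _⟩) <;> exact hw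
        · intro hw; rcases h w hw with h' | h'
          · exact Or.inl ⟨hw, h'⟩
          · exact Or.inr ⟨hw, h'⟩
      · exact (iha _).2 fun w hw => hw.2
      · exact (ihb _).2 fun w hw => hw.2
  | and a b iha ihb =>
    intro T
    constructor
    · rintro ⟨h1, h2⟩ w hw
      exact ⟨(iha T).1 h1 w hw, (ihb T).1 h2 w hw⟩
    · intro h
      exact ⟨(iha T).2 fun w hw => (h w hw).1, (ihb T).2 fun w hw => (h w hw).2⟩
  | dia a ih =>
    intro T
    constructor
    · rintro ⟨S, hS, hSa⟩ w hw
      obtain ⟨v, hvS, hR⟩ := hS.2 w hw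
      exact ⟨v, hR, (ih S).1 hSa v hvS⟩
    · intro h
      refine ⟨{v | ∃ w ∈ T, M.R w v ∧ wSat M v a}, ⟨?_, ?_⟩, ?_⟩
      · rintro v ⟨w, hw, hR, _⟩; exact ⟨w, hw, hR⟩
      · intro w hw
        obtain ⟨v, hR, hv⟩ := h w hw
        exact ⟨v, ⟨w, hw, hR, hv⟩, hR⟩
      · exact (ih _).2 fun v hv => hv.choose_spec.2.2
  | box a ih =>
    intro T
    constructor
    · intro h w hw v hR
      exact (ih _).1 h v ⟨w, hw, hR⟩
    · intro h
      exact (ih _).2 fun v hv => by obtain ⟨w, hw, hR⟩ := hv; exact h w hw v hR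

theorem key {W : Type} (M : KModel W) (α : MF) (T : Set W) :
    TSat M T (.incl [MF.top] [α]) ↔ (T = ∅ ∨ ∃ v ∈ T, wSat M v α) := by
  constructor
  · intro h
    rcases Set.eq_empty_or_nonempty T with rfl | ⟨w, hw⟩
    · exact Or.inl rfl
    · obtain ⟨v, hv, h'⟩ := h w hw
      refine Or.inr ⟨v, hv, ?_⟩
      have := h' 0 (by simp) (by simp)
      simp only [List.get] at this
      exact this.1 (fun f => f)
  · rintro (rfl | ⟨v, hv, hα⟩)
    · intro w hw; exact absurd hw (Set.notMem_empty w)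
    · intro w hw
      refine ⟨v, hv, ?_⟩
      intro i h1 h2
      simp only [List.length] at h1 h2
      obtain rfl : i = 0 := Nat.lt_one_iff.1 h1
      simp only [List.get]
      constructor
      · intro _; exact hα
      · intro _ f; exact f

theorem stmt8 (α : MF) (W : Type) (M : KModel W) (T : Set W) :
    (TSat M T (.incl [MF.top] [α]) ↔ (T = ∅ ∨ ∃ w ∈ T, TSat M {w} (toInc α)))
    ∧ (TSat M T (.incl [MF.top] [α]) ↔
        (T = ∅ ∨ ∃ S ⊆ T, S.Nonempty ∧ TSat M S (toInc α))) := by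
  constructor
  · rw [key]
    apply or_congr_right
    constructor
    · rintro ⟨v, hv, hα⟩
      exact ⟨v, hv, (flatness M α {v}).2 (by rintro w rfl; exact hα)⟩
    · rintro ⟨v, hv, h⟩
      exact ⟨v, hv, (flatness M α {v}).1 h v rfl⟩
  · rw [key]
    apply or_congr_right
    constructor
    · rintro ⟨v, hv, hα⟩
      exact ⟨{v}, by simpa using hv, ⟨v, rfl⟩,
        (flatness M α {v}).2 (by rintro w rfl; exact hα)⟩
    · rintro ⟨S, hST, ⟨v, hv⟩, h⟩
      exact ⟨v, hST hv, (flatness M α S).1 h v hv⟩
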